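/- In the hyperoctahedron face module, for disjoint subsets a, b of the positive vertex set with |a| + |b| = k and |b| = j, the element [a,b] = ∏_{α∈a}(α + ᾱ)·∏_{β∈b}(β − β̄) is an eigenvector of σ_k with eigenvalue k − 2j. -/

import Mathlib

open Finset

/-- The opposite vertex: `(i, true) = αᵢ ↔ (i, false) = ᾱᵢ`. -/
def oppv {n : ℕ} (p : Fin n × Bool) : Fin n × Bool := (p.1, !p.2)

/-- The flip map `σ(x) = Σ_{γ ∈ x} ((x \ γ) ∪ {γ̄})` on the module of formal
`F`-linear combinations of subsets of the vertex set. -/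
noncomputable def sigmaMap (F : Type*) [CommRing F] (n : ℕ) :
    (Finset (Fin n × Bool) →₀ F) →ₗ[F] (Finset (Fin n × Bool) →₀ F) :=
  Finsupp.lsum F fun x => LinearMap.toSpanSingleton F _
    (∑ γ ∈ x, Finsupp.single (insert (oppv γ) (x.erase γ)) (1 : F))

/-- The face attached to `s ⊆ t`: unbarred vertices `t \ s`, barred vertices `s`. -/
def face {n : ℕ} (t s : Finset (Fin n)) : Finset (Fin n × Bool) :=
  ((t \ s).image fun i => (i, true)) ∪ (s.image fun i => (i, false))

lemma mem_face {n : ℕ} {t s : Finset (Fin n)} {p : Fin n × Bool} :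
    p ∈ face t s ↔ (p.1 ∈ t ∧ p.1 ∉ s ∧ p.2 = true) ∨ (p.1 ∈ s ∧ p.2 = false) := by
  obtain ⟨i, c⟩ := p
  simp [face, Prod.ext_iff, eq_comm, and_assoc]

lemma flip_true {n : ℕ} {t s : Finset (Fin n)} {i : Fin n} (hi : i ∈ t) (his : i ∉ s) :
    insert (oppv (i, true)) ((face t s).erase (i, true)) = face t (insert i s) := by
  ext ⟨x, c⟩
  simp only [oppv, mem_insert, mem_erase, mem_face, Prod.ext_iff, Finset.mem_insert]
  by_cases hx : x = i <;> cases c <;> simp_all <;> tauto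

lemma flip_false {n : ℕ} {t s : Finset (Fin n)} {i : Fin n} (hi : i ∈ s) (hs : s ⊆ t) :
    insert (oppv (i, false)) ((face t s).erase (i, false)) = face t (s.erase i) := by
  ext ⟨x, c⟩
  simp only [oppv, mem_insert, mem_erase, mem_face, Prod.ext_iff, Finset.mem_erase]
  by_cases hx : x = i <;> cases c <;> simp_all [hs hi] <;> tauto

lemma sum_face {n : ℕ} {M : Type*} [AddCommMonoid M] (t s : Finset (Fin n))
    (G : Fin n × Bool → M) :
    ∑ γ ∈ face t s, G γ = ∑ i ∈ t \ s, G (i, true) + ∑ i ∈ s, G (i, false) := by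
  rw [face, Finset.sum_union (by simp [Finset.disjoint_left]),
    Finset.sum_image (by simp), Finset.sum_image (by simp)]

lemma sigmaMap_single {F : Type*} [CommRing F] {n : ℕ} (x : Finset (Fin n × Bool)) :
    sigmaMap F n (Finsupp.single x (1 : F)) =
      ∑ γ ∈ x, Finsupp.single (insert (oppv γ) (x.erase γ)) (1 : F) := by
  simp [sigmaMap, Finsupp.lsum_single, LinearMap.toSpanSingleton_apply]

lemma sum_powerset_union_disjoint {ι M : Type*} [DecidableEq ι] [AddCommMonoid M]
    {a b : Finset ι} (h : Disjoint a b) (f : Finset ι → M) :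
    ∑ u ∈ a.powerset, ∑ v ∈ b.powerset, f (u ∪ v) = ∑ s ∈ (a ∪ b).powerset, f s := by
  rw [← Finset.sum_product']
  refine Finset.sum_nbij' (fun p => p.1 ∪ p.2) (fun s => (s ∩ a, s ∩ b)) ?_ ?_ ?_ ?_ ?_
  · rintro ⟨u, v⟩ hp
    simp only [Finset.mem_product, Finset.mem_powerset] at hp ⊢
    exact Finset.union_subset_union hp.1 hp.2
  · intro s hs
    simp only [Finset.mem_product, Finset.mem_powerset]
    exact ⟨Finset.inter_subset_right, Finset.inter_subset_right⟩
  · rintro ⟨u, v⟩ hp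
    simp only [Finset.mem_product, Finset.mem_powerset] at hp
    have h1 : (u ∪ v) ∩ a = u := by
      ext x
      simp only [Finset.mem_inter, Finset.mem_union]
      constructor
      · rintro ⟨hx | hx, hxa⟩
        · exact hx
        · exact (Finset.disjoint_left.1 h hxa (hp.2 hx)).elim
      · intro hx; exact ⟨Or.inl hx, hp.1 hx⟩
    have h2 : (u ∪ v) ∩ b = v := by
      ext x
      simp only [Finset.mem_inter, Finset.mem_union]
      constructor
      · rintro ⟨hx | hx, hxb⟩
        · exact (Finset.disjoint_left.1 h (hp.1 hx) hxb).elim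
        · exact hx
      · intro hx; exact ⟨Or.inr hx, hp.2 hx⟩
    simp [h1, h2]
  · intro s hs
    simp only [Finset.mem_powerset] at hs
    simp [← Finset.inter_union_distrib_left, Finset.inter_eq_left.2 hs]
  · intro p hp; rfl

/-- Reindexing: pairs (s, i∉s) ↔ pairs (s', i∈s') via s' = insert i s. -/
lemma reindex_insert {ι M : Type*} [DecidableEq ι] [AddCommMonoid M]
    (t : Finset ι) (g : Finset ι → ι → M) :
    ∑ s ∈ t.powerset, ∑ i ∈ t \ s, g s i =
      ∑ s ∈ t.powerset, ∑ i ∈ s, g (s.erase i) i := by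
  rw [Finset.sum_sigma' t.powerset (fun s => t \ s), Finset.sum_sigma' t.powerset (fun s => s)]
  refine Finset.sum_nbij' (fun p => ⟨insert p.2 p.1, p.2⟩) (fun p => ⟨p.1.erase p.2, p.2⟩)
    ?_ ?_ ?_ ?_ ?_
  · rintro ⟨s, i⟩ hp
    simp only [Finset.mem_sigma, Finset.mem_powerset, Finset.mem_sdiff] at hp ⊢
    exact ⟨Finset.insert_subset hp.2.1 hp.1, Finset.mem_insert_self _ _⟩
  · rintro ⟨s, i⟩ hp
    simp only [Finset.mem_sigma, Finset.mem_powerset, Finset.mem_sdiff] at hp ⊢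
    exact ⟨(Finset.erase_subset _ _).trans hp.1, hp.1 hp.2, Finset.notMem_erase _ _⟩
  · rintro ⟨s, i⟩ hp
    simp only [Finset.mem_sigma, Finset.mem_powerset, Finset.mem_sdiff] at hp
    simp [Finset.erase_insert hp.2.2]
  · rintro ⟨s, i⟩ hp
    simp only [Finset.mem_sigma, Finset.mem_powerset] at hp
    simp [Finset.insert_erase hp.2]
  · rintro ⟨s, i⟩ hp
    simp only [Finset.mem_sigma, Finset.mem_powerset, Finset.mem_sdiff] at hp
    simp [Finset.erase_insert hp.2.2]

lemma coeff_sum {F : Type*} [CommRing F] {n : ℕ} {a b s : Finset (Fin n)}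
    (hab : Disjoint a b) (hs : s ⊆ a ∪ b) :
    (∑ i ∈ s, (-1 : F) ^ ((s.erase i ∩ b).card)) +
      ∑ i ∈ (a ∪ b) \ s, (-1 : F) ^ (((insert i s) ∩ b).card)
      = ((a.card : F) - (b.card : F)) * (-1) ^ ((s ∩ b).card) := by
  have h1 : ∀ i ∈ s, (-1 : F) ^ ((s.erase i ∩ b).card)
      = (if i ∈ b then (-1 : F) else 1) * (-1) ^ ((s ∩ b).card) := by
    intro i hi
    by_cases hib : i ∈ b
    · have he : s.erase i ∩ b = (s ∩ b).erase i := by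
        ext x; simp only [mem_inter, mem_erase]; tauto
      have hc : ((s ∩ b).erase i).card + 1 = (s ∩ b).card :=
        Finset.card_erase_add_one (mem_inter.2 ⟨hi, hib⟩)
      rw [he, if_pos hib, ← hc, pow_succ]; ring
    · have he : s.erase i ∩ b = s ∩ b := by
        ext x; simp only [mem_inter, mem_erase]
        constructor
        · tauto
        · rintro ⟨hx1, hx2⟩
          refine ⟨⟨?_, hx1⟩, hx2⟩
          rintro rfl; exact hib hx2
      rw [he, if_neg hib, one_mul]
  have h2 : ∀ i ∈ (a ∪ b) \ s, (-1 : F) ^ (((insert i s) ∩ b).card)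
      = (if i ∈ b then (-1 : F) else 1) * (-1) ^ ((s ∩ b).card) := by
    intro i hi
    rw [Finset.mem_sdiff] at hi
    by_cases hib : i ∈ b
    · rw [Finset.insert_inter_of_mem hib,
        Finset.card_insert_of_notMem (fun h => hi.2 (mem_inter.1 h).1),
        if_pos hib, pow_succ]; ring
    · rw [Finset.insert_inter_of_notMem hib, if_neg hib, one_mul]
  rw [Finset.sum_congr rfl h1, Finset.sum_congr rfl h2, ← Finset.sum_mul, ← Finset.sum_mul,
    ← add_mul, add_comm (∑ i ∈ s, _), Finset.sum_sdiff hs]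
  congr 1
  rw [Finset.sum_union hab]
  have ha' : ∀ i ∈ a, (if i ∈ b then (-1 : F) else 1) = 1 :=
    fun i hi => if_neg (Finset.disjoint_left.1 hab hi)
  have hb' : ∀ i ∈ b, (if i ∈ b then (-1 : F) else 1) = -1 := fun i hi => if_pos hi
  rw [Finset.sum_congr rfl ha', Finset.sum_congr rfl hb', Finset.sum_const, Finset.sum_const]
  simp; ring

/-- The element `[a,b] = ∏_{α ∈ a} (α + ᾱ) · ∏_{β ∈ b} (β - β̄)`, expanded as a
signed sum of faces: the sum runs over the sets `u ⊆ a`, `v ⊆ b` of indices where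
the barred vertex is chosen, with sign `(-1)^{|v|}`. -/
noncomputable def elt (F : Type*) [CommRing F] {n : ℕ} (a b : Finset (Fin n)) :
    Finset (Fin n × Bool) →₀ F :=
  ∑ u ∈ a.powerset, ∑ v ∈ b.powerset,
    ((-1 : F) ^ v.card) •
      Finsupp.single
        ((((a ∪ b) \ (u ∪ v)).image fun i => (i, true)) ∪
          ((u ∪ v).image fun i => (i, false))) (1 : F)

theorem stmt_10 {F : Type*} [CommRing F] (n k j : ℕ) (a b : Finset (Fin n))
    (hab : Disjoint a b) (hk : a.card + b.card = k) (hj : b.card = j) :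
    sigmaMap F n (elt F a b) = ((k : F) - 2 * (j : F)) • elt F a b := by
  classical
  subst hk; subst hj
  -- Reparametrize [a,b] as a single sum over subsets of a ∪ b.
  have helt : elt F a b = ∑ s ∈ (a ∪ b).powerset,
      ((-1 : F) ^ ((s ∩ b).card)) • Finsupp.single (face (a ∪ b) s) (1 : F) := by
    rw [elt, ← sum_powerset_union_disjoint hab
      (fun s => ((-1 : F) ^ ((s ∩ b).card)) • Finsupp.single (face (a ∪ b) s) (1 : F))]
    refine Finset.sum_congr rfl fun u hu => Finset.sum_congr rfl fun v hv => ?_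
    rw [Finset.mem_powerset] at hu hv
    have h2 : (u ∪ v) ∩ b = v := by
      ext x
      simp only [Finset.mem_inter, Finset.mem_union]
      constructor
      · rintro ⟨hx | hx, hxb⟩
        · exact (Finset.disjoint_left.1 hab (hu hx) hxb).elim
        · exact hx
      · intro hx; exact ⟨Or.inr hx, hv hx⟩
    rw [h2]
    rfl
  rw [helt, map_sum]
  -- Apply σ to each basis face.
  have hstep : ∀ s ∈ (a ∪ b).powerset,
      sigmaMap F n (((-1 : F) ^ ((s ∩ b).card)) • Finsupp.single (face (a ∪ b) s) (1 : F))
        = (∑ i ∈ (a ∪ b) \ s,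
            ((-1 : F) ^ ((s ∩ b).card)) • Finsupp.single (face (a ∪ b) (insert i s)) (1 : F))
          + ∑ i ∈ s,
            ((-1 : F) ^ ((s ∩ b).card)) • Finsupp.single (face (a ∪ b) (s.erase i)) (1 : F) := by
    intro s hs
    rw [Finset.mem_powerset] at hs
    rw [map_smul, sigmaMap_single, sum_face]
    have e1 : ∀ i ∈ (a ∪ b) \ s,
        Finsupp.single (insert (oppv (i, true)) ((face (a ∪ b) s).erase (i, true))) (1 : F)
          = Finsupp.single (face (a ∪ b) (insert i s)) (1 : F) := by
      intro i hi
      rw [Finset.mem_sdiff] at hi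
      rw [flip_true hi.1 hi.2]
    have e2 : ∀ i ∈ s,
        Finsupp.single (insert (oppv (i, false)) ((face (a ∪ b) s).erase (i, false))) (1 : F)
          = Finsupp.single (face (a ∪ b) (s.erase i)) (1 : F) := by
      intro i hi
      rw [flip_false hi hs]
    rw [Finset.sum_congr rfl e1, Finset.sum_congr rfl e2, smul_add, Finset.smul_sum,
      Finset.smul_sum]
  rw [Finset.sum_congr rfl hstep, Finset.sum_add_distrib]
  -- Reindex both double sums so that the face is indexed by s itself.
  have hA : (∑ s ∈ (a ∪ b).powerset, ∑ i ∈ (a ∪ b) \ s,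
        ((-1 : F) ^ ((s ∩ b).card)) • Finsupp.single (face (a ∪ b) (insert i s)) (1 : F))
      = ∑ s ∈ (a ∪ b).powerset, ∑ i ∈ s,
        ((-1 : F) ^ ((s.erase i ∩ b).card)) • Finsupp.single (face (a ∪ b) s) (1 : F) := by
    rw [reindex_insert (a ∪ b)
      (fun s i => ((-1 : F) ^ ((s ∩ b).card)) • Finsupp.single (face (a ∪ b) (insert i s)) (1 : F))]
    refine Finset.sum_congr rfl fun s hs => Finset.sum_congr rfl fun i hi => ?_
    rw [Finset.insert_erase hi]
  have hB : (∑ s ∈ (a ∪ b).powerset, ∑ i ∈ s,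
        ((-1 : F) ^ ((s ∩ b).card)) • Finsupp.single (face (a ∪ b) (s.erase i)) (1 : F))
      = ∑ s ∈ (a ∪ b).powerset, ∑ i ∈ (a ∪ b) \ s,
        ((-1 : F) ^ (((insert i s) ∩ b).card)) • Finsupp.single (face (a ∪ b) s) (1 : F) := by
    rw [reindex_insert (a ∪ b)
      (fun s i => ((-1 : F) ^ (((insert i s) ∩ b).card)) • Finsupp.single (face (a ∪ b) s) (1 : F))]
    refine Finset.sum_congr rfl fun s hs => Finset.sum_congr rfl fun i hi => ?_
    rw [Finset.insert_erase hi]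
  rw [hA, hB, ← Finset.sum_add_distrib]
  -- Sum the coefficients pointwise.
  have hcoeff : ∀ s ∈ (a ∪ b).powerset,
      ((∑ i ∈ s, ((-1 : F) ^ ((s.erase i ∩ b).card)) •
          Finsupp.single (face (a ∪ b) s) (1 : F))
        + ∑ i ∈ (a ∪ b) \ s, ((-1 : F) ^ (((insert i s) ∩ b).card)) •
          Finsupp.single (face (a ∪ b) s) (1 : F))
      = ((a.card : F) - (b.card : F)) •
          (((-1 : F) ^ ((s ∩ b).card)) • Finsupp.single (face (a ∪ b) s) (1 : F)) := by
    intro s hs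
    rw [Finset.mem_powerset] at hs
    rw [← Finset.sum_smul, ← Finset.sum_smul, ← add_smul, coeff_sum hab hs, mul_smul]
  rw [Finset.sum_congr rfl hcoeff, ← Finset.smul_sum, ← helt]
  congr 1
  push_cast
  ring
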